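/- (High-low pairing.) Consider n ≥ 2 bidders with equal values v_i = v ≥ 0 for all i, and a prior g supported on exactly two CTR profiles r and r', each with probability 1/2, such that for two distinct bidders i, j one has r_i = r'_j > r_j = r'_i, and r_j ≥ r_k and r_j ≥ r'_k for every bidder k ∉ {i,j}. Then for every ε > 0 there exists a calibrated information structure x for g with Rev(x) ≥ v·r_i − ε. -/

import Mathlib

open scoped Classical

noncomputable section

/-- A finitely supported probability mass function on CTR vectors in [0,1]ⁿ. -/
def IsPriorN {n : ℕ} (g : (Fin n → ℝ) → ℝ) : Prop :=
  (Function.support g).Finite ∧ (∀ r, 0 ≤ g r) ∧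
  (∀ r, g r ≠ 0 → ∀ i, 0 ≤ r i ∧ r i ≤ 1) ∧ (∑ᶠ r, g r) = 1

/-- An information structure for the prior `g`: finitely supported, nonnegative,
signals in [0,1]ⁿ, with `r`-marginal equal to `g`. -/
def IsInfoN {n : ℕ} (g : (Fin n → ℝ) → ℝ) (x : (Fin n → ℝ) × (Fin n → ℝ) → ℝ) : Prop :=
  (Function.support x).Finite ∧ (∀ p, 0 ≤ x p) ∧
  (∀ p, x p ≠ 0 → ∀ i, 0 ≤ p.2 i ∧ p.2 i ≤ 1) ∧ (∀ r, (∑ᶠ s, x (r, s)) = g r)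

/-- Calibration: the posterior mean of `rᵢ` given any signal value `c` of bidder `i`
equals `c`. -/
def CalibratedN {n : ℕ} (x : (Fin n → ℝ) × (Fin n → ℝ) → ℝ) : Prop :=
  ∀ i : Fin n, ∀ c : ℝ, 0 ≤ c → c ≤ 1 →
    (∑ᶠ p : (Fin n → ℝ) × (Fin n → ℝ), if p.2 i = c then x p * (p.1 i - c) else 0) = 0

/-- The maximal value-weighted signal `max_j v_j s_j`. -/
def maxScore {n : ℕ} (v s : Fin n → ℝ) : ℝ := ⨆ i, v i * s i

/-- The set of winners `W(s) = {i : v_i s_i = max_j v_j s_j}`. -/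
def winners {n : ℕ} (v s : Fin n → ℝ) : Finset (Fin n) :=
  Finset.univ.filter fun i => v i * s i = maxScore v s

/-- The highest competing value-weighted signal `max_{j ≠ i} v_j s_j`. -/
def maxOther {n : ℕ} (v s : Fin n → ℝ) (i : Fin n) : ℝ :=
  ⨆ j : {j : Fin n // j ≠ i}, v j.1 * s j.1

/-- Expected revenue of the click-through auction with uniform tie-breaking
(division by zero is zero in Lean, matching the convention t/0 = 0). -/
def RevN {n : ℕ} (v : Fin n → ℝ) (x : (Fin n → ℝ) × (Fin n → ℝ) → ℝ) : ℝ :=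
  ∑ᶠ p : (Fin n → ℝ) × (Fin n → ℝ), x p *
    (((winners v p.2).card : ℝ)⁻¹ *
      ∑ i ∈ winners v p.2, p.1 i * (maxOther v p.2 i / p.2 i))


section HelperLemmas

variable {α : Type*}

def pairX (m : ℕ) (w : ℕ → ℝ) (pR pR' : ℕ → α) (p : α) : ℝ :=
  ∑ k ∈ Finset.range m, ((if p = pR k then w k else 0) + (if p = pR' k then w k else 0))

lemma pairX_nonneg (m : ℕ) (w : ℕ → ℝ) (pR pR' : ℕ → α) (hw : ∀ k, 0 ≤ w k) (p : α) :
    0 ≤ pairX m w pR pR' p :=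
  Finset.sum_nonneg fun k _ =>
    add_nonneg (by split <;> simp [hw k]) (by split <;> simp [hw k])

lemma pairX_eq_zero (m : ℕ) (w : ℕ → ℝ) (pR pR' : ℕ → α) (p : α)
    (hp : ∀ k ∈ Finset.range m, p ≠ pR k ∧ p ≠ pR' k) : pairX m w pR pR' p = 0 :=
  Finset.sum_eq_zero fun k hk => by rw [if_neg (hp k hk).1, if_neg (hp k hk).2, add_zero]

lemma pairX_apply_left (m : ℕ) (w : ℕ → ℝ) (pR pR' : ℕ → α)
    (hinj : ∀ k ∈ Finset.range m, ∀ k' ∈ Finset.range m, pR k = pR k' → k = k')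
    (hne : ∀ k ∈ Finset.range m, ∀ k' ∈ Finset.range m, pR k ≠ pR' k')
    {k : ℕ} (hk : k ∈ Finset.range m) : pairX m w pR pR' (pR k) = w k := by
  unfold pairX
  rw [Finset.sum_add_distrib]
  have h1 : (∑ k' ∈ Finset.range m, if pR k = pR k' then w k' else 0) = w k := by
    rw [Finset.sum_eq_single k
      (fun k' hk' hkk => if_neg fun h => hkk (hinj k' hk' k hk h.symm))
      (fun h => absurd hk h)]
    simp
  have h2 : (∑ k' ∈ Finset.range m, if pR k = pR' k' then w k' else 0) = 0 :=
    Finset.sum_eq_zero fun k' hk' => if_neg (hne k hk k' hk')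
  rw [h1, h2, add_zero]

lemma pairX_apply_right (m : ℕ) (w : ℕ → ℝ) (pR pR' : ℕ → α)
    (hinj : ∀ k ∈ Finset.range m, ∀ k' ∈ Finset.range m, pR' k = pR' k' → k = k')
    (hne : ∀ k ∈ Finset.range m, ∀ k' ∈ Finset.range m, pR k ≠ pR' k')
    {k : ℕ} (hk : k ∈ Finset.range m) : pairX m w pR pR' (pR' k) = w k := by
  unfold pairX
  rw [Finset.sum_add_distrib]
  have h1 : (∑ k' ∈ Finset.range m, if pR' k = pR k' then w k' else 0) = 0 :=
    Finset.sum_eq_zero fun k' hk' => if_neg fun h => hne k' hk' k hk h.symm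
  have h2 : (∑ k' ∈ Finset.range m, if pR' k = pR' k' then w k' else 0) = w k := by
    rw [Finset.sum_eq_single k
      (fun k' hk' hkk => if_neg fun h => hkk (hinj k' hk' k hk h.symm))
      (fun h => absurd hk h)]
    simp
  rw [h1, h2, zero_add]

lemma pairX_support (m : ℕ) (w : ℕ → ℝ) (pR pR' : ℕ → α) :
    Function.support (pairX m w pR pR')
      ⊆ ↑((Finset.range m).image pR ∪ (Finset.range m).image pR') := by
  intro p hp
  by_contra hmem
  apply hp
  apply pairX_eq_zero
  intro k hk
  constructor
  · rintro rfl
    exact hmem (Finset.mem_coe.2 (Finset.mem_union_left _ (Finset.mem_image.2 ⟨k, hk, rfl⟩)))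
  · rintro rfl
    exact hmem (Finset.mem_coe.2 (Finset.mem_union_right _ (Finset.mem_image.2 ⟨k, hk, rfl⟩)))

lemma pairX_finsum (m : ℕ) (w : ℕ → ℝ) (pR pR' : ℕ → α)
    (hinjL : ∀ k ∈ Finset.range m, ∀ k' ∈ Finset.range m, pR k = pR k' → k = k')
    (hinjR : ∀ k ∈ Finset.range m, ∀ k' ∈ Finset.range m, pR' k = pR' k' → k = k')
    (hne : ∀ k ∈ Finset.range m, ∀ k' ∈ Finset.range m, pR k ≠ pR' k')
    (h : α → ℝ) :
    ∑ᶠ p, pairX m w pR pR' p * h p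
      = ∑ k ∈ Finset.range m, w k * (h (pR k) + h (pR' k)) := by
  classical
  have hsupp : Function.support (fun p => pairX m w pR pR' p * h p)
      ⊆ ↑((Finset.range m).image pR ∪ (Finset.range m).image pR') := by
    intro p hp
    have hx : pairX m w pR pR' p ≠ 0 := by
      intro h0
      apply hp
      simp [h0]
    exact pairX_support m w pR pR' hx
  rw [finsum_eq_sum_of_support_subset _ hsupp]
  have hdisj : Disjoint ((Finset.range m).image pR) ((Finset.range m).image pR') := by
    rw [Finset.disjoint_left]
    rintro p hp hp'
    obtain ⟨k, hk, rfl⟩ := Finset.mem_image.1 hp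
    obtain ⟨k', hk', hEq⟩ := Finset.mem_image.1 hp'
    exact hne k hk k' hk' hEq.symm
  rw [Finset.sum_union hdisj, Finset.sum_image hinjL, Finset.sum_image hinjR,
    ← Finset.sum_add_distrib]
  apply Finset.sum_congr rfl
  intro k hk
  rw [pairX_apply_left m w pR pR' hinjL hne hk, pairX_apply_right m w pR pR' hinjR hne hk]
  ring

lemma single_finsum (m : ℕ) (w : ℕ → ℝ) (q : ℕ → α)
    (hinj : ∀ k ∈ Finset.range m, ∀ k' ∈ Finset.range m, q k = q k' → k = k') :
    (∑ᶠ a, ∑ k ∈ Finset.range m, if a = q k then w k else 0)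
      = ∑ k ∈ Finset.range m, w k := by
  classical
  have hsupp : Function.support (fun a => ∑ k ∈ Finset.range m, if a = q k then w k else 0)
      ⊆ ↑((Finset.range m).image q) := by
    intro a ha
    by_contra hmem
    apply ha
    exact Finset.sum_eq_zero fun k hk =>
      if_neg fun hE => hmem (Finset.mem_coe.2 (Finset.mem_image.2 ⟨k, hk, hE.symm⟩))
  rw [finsum_eq_sum_of_support_subset _ hsupp, Finset.sum_image hinj]
  apply Finset.sum_congr rfl
  intro k hk
  rw [Finset.sum_eq_single k
    (fun k' hk' hkk => if_neg fun h => hkk ((hinj k hk k' hk' h).symm))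
    (fun h => absurd hk h)]
  simp

end HelperLemmas

section AuctionLemmas

lemma winners_eq_singleton {n : ℕ} (v : ℝ) (hv : 0 < v) (s : Fin n → ℝ) (i0 : Fin n)
    (hlt : ∀ l, l ≠ i0 → s l < s i0) :
    winners (fun _ => v) s = {i0} := by
  haveI : Nonempty (Fin n) := ⟨i0⟩
  have hle : ∀ l, v * s l ≤ v * s i0 := by
    intro l
    rcases eq_or_ne l i0 with h | h
    · rw [h]
    · exact le_of_lt (mul_lt_mul_of_pos_left (hlt l h) hv)
  have hms : maxScore (fun _ => v) s = v * s i0 := by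
    unfold maxScore
    exact le_antisymm (ciSup_le hle)
      (le_ciSup (f := fun l => (fun _ : Fin n => v) l * s l) (Set.finite_range _).bddAbove i0)
  ext l
  simp only [winners, Finset.mem_filter, Finset.mem_univ, true_and, hms,
    Finset.mem_singleton]
  constructor
  · intro h
    by_contra hne
    exact absurd h (ne_of_lt (mul_lt_mul_of_pos_left (hlt l hne) hv))
  · rintro rfl; rfl

lemma maxOther_eq {n : ℕ} (v : ℝ) (hv : 0 ≤ v) (s : Fin n → ℝ) (i0 j0 : Fin n) (hne : j0 ≠ i0)
    (hle : ∀ l, l ≠ i0 → s l ≤ s j0) : maxOther (fun _ => v) s i0 = v * s j0 := by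
  haveI hNE : Nonempty {l : Fin n // l ≠ i0} := ⟨⟨j0, hne⟩⟩
  unfold maxOther
  apply le_antisymm
  · exact ciSup_le (f := fun l : {l : Fin n // l ≠ i0} => (fun _ : Fin n => v) l.1 * s l.1)
      fun l => mul_le_mul_of_nonneg_left (hle l l.2) hv
  · exact le_ciSup (f := fun l : {l : Fin n // l ≠ i0} => (fun _ : Fin n => v) l.1 * s l.1)
      (Set.finite_range _).bddAbove (⟨j0, hne⟩ : {l : Fin n // l ≠ i0})

lemma maxOther_zero {n : ℕ} (hn : 2 ≤ n) (s : Fin n → ℝ) (i0 : Fin n) :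
    maxOther (fun _ => (0:ℝ)) s i0 = 0 := by
  haveI hNE : Nonempty {l : Fin n // l ≠ i0} := by
    obtain ⟨y, hy⟩ := Fintype.exists_ne_of_one_lt_card (by simp; omega) i0
    exact ⟨⟨y, hy⟩⟩
  unfold maxOther
  simp

end AuctionLemmas

set_option maxHeartbeats 1000000 in
/-- high-low pairing: with n equal-value bidders and a prior on two
profiles that swap bidders i and j (who dominate all others), calibrated
information structures can extract revenue at least v·rᵢ − ε. -/
theorem high_low_pairing
    (n : ℕ) (hn : 2 ≤ n) (v : ℝ) (hv : 0 ≤ v)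
    (r r' : Fin n → ℝ) (i j : Fin n) (hij : i ≠ j)
    (hr : ∀ k, 0 ≤ r k ∧ r k ≤ 1) (hr' : ∀ k, 0 ≤ r' k ∧ r' k ≤ 1)
    (hswap1 : r i = r' j) (hswap2 : r j = r' i) (hlt : r j < r i)
    (hdom : ∀ k, k ≠ i → k ≠ j → r k ≤ r j ∧ r' k ≤ r j)
    (g : (Fin n → ℝ) → ℝ)
    (hgdef : ∀ w, g w = if w = r then 1/2 else if w = r' then 1/2 else 0)
    (ε : ℝ) (hε : 0 < ε) :
    ∃ x : (Fin n → ℝ) × (Fin n → ℝ) → ℝ,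
      IsInfoN g x ∧ CalibratedN x ∧ v * r i - ε ≤ RevN (fun _ => v) x := by
  classical
  set m : ℕ := max 1 ⌈2 * r i * v / ε⌉₊ with hmdef
  have hm1 : 1 ≤ m := le_max_left _ _
  have hm0 : (0:ℝ) < (m:ℝ) := by exact_mod_cast hm1
  have hmne : (m:ℝ) ≠ 0 := ne_of_gt hm0
  have hb0 : (0:ℝ) ≤ r j := (hr j).1
  have ha1 : r i ≤ 1 := (hr i).2
  have hab : r j < r i := hlt
  have ha0 : 0 < r i := lt_of_le_of_lt hb0 hab
  set d : ℝ := (r i - r j) / m with hddef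
  have hd0 : 0 < d := div_pos (sub_pos.2 hab) hm0
  set c : ℕ → ℝ := fun t => r j + t * d with hcdef
  have hcmono : StrictMono c := by
    intro s t hst
    simp only [hcdef]
    have h1 : (s:ℝ) < t := by exact_mod_cast hst
    nlinarith [hd0]
  have hcinj : Function.Injective c := hcmono.injective
  have hc0 : c 0 = r j := by simp [hcdef]
  have hcm : c m = r i := by
    simp only [hcdef, hddef]
    field_simp
    ring
  have hcb : ∀ t, r j ≤ c t := by
    intro t
    have h1 : (0:ℝ) ≤ (t:ℝ) * d := by positivity
    simp only [hcdef]
    linarith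
  have hca : ∀ t, t ≤ m → c t ≤ r i := fun t ht => hcm ▸ hcmono.monotone ht
  have hclb : ∀ t : ℕ, (t:ℝ) * d ≤ c t := by
    intro t
    simp only [hcdef]
    linarith
  have hcpos : ∀ k : ℕ, 0 < c (k+1) := by
    intro k
    have h1 : (0:ℝ) < ((k:ℝ)+1) * d := by positivity
    have h2 := hclb (k+1)
    push_cast at h2
    linarith
  have hcbound : ∀ t, t ≤ m → 0 ≤ c t ∧ c t ≤ 1 :=
    fun t ht => ⟨hb0.trans (hcb t), (hca t ht).trans ha1⟩
  have hji : j ≠ i := hij.symm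
  set sR : ℕ → Fin n → ℝ := fun k l => if l = i then c (k+1) else if l = j then c k else r l
    with hsRdef
  set sR' : ℕ → Fin n → ℝ := fun k l => if l = i then c k else if l = j then c (k+1) else r' l
    with hsR'def
  have hsRi : ∀ k, sR k i = c (k+1) := fun k => by simp [hsRdef]
  have hsRj : ∀ k, sR k j = c k := fun k => by simp [hsRdef, hji]
  have hsRo : ∀ k l, l ≠ i → l ≠ j → sR k l = r l := fun k l h1 h2 => by
    simp [hsRdef, h1, h2]
  have hsR'i : ∀ k, sR' k i = c k := fun k => by simp [hsR'def]
  have hsR'j : ∀ k, sR' k j = c (k+1) := fun k => by simp [hsR'def, hji]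
  have hsR'o : ∀ k l, l ≠ i → l ≠ j → sR' k l = r' l := fun k l h1 h2 => by
    simp [hsR'def, h1, h2]
  set pR : ℕ → (Fin n → ℝ) × (Fin n → ℝ) := fun k => (r, sR k) with hpRdef
  set pR' : ℕ → (Fin n → ℝ) × (Fin n → ℝ) := fun k => (r', sR' k) with hpR'def
  set w : ℕ → ℝ := fun k => ((m-1).choose k : ℝ) / 2^m with hwdef
  have hw0 : ∀ k, 0 ≤ w k := fun k => by simp only [hwdef]; positivity
  have hrr' : r ≠ r' := by
    intro h
    have h1 : r i = r j := (congrFun h i).trans hswap2.symm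
    linarith
  have hinjL : ∀ k ∈ Finset.range m, ∀ k' ∈ Finset.range m, pR k = pR k' → k = k' := by
    intro k _ k' _ h
    have h1 : sR k i = sR k' i := congrFun (congrArg Prod.snd h) i
    rw [hsRi, hsRi] at h1
    have := hcinj h1
    omega
  have hinjR : ∀ k ∈ Finset.range m, ∀ k' ∈ Finset.range m, pR' k = pR' k' → k = k' := by
    intro k _ k' _ h
    have h1 : sR' k j = sR' k' j := congrFun (congrArg Prod.snd h) j
    rw [hsR'j, hsR'j] at h1
    have := hcinj h1
    omega
  have hneLR : ∀ k ∈ Finset.range m, ∀ k' ∈ Finset.range m, pR k ≠ pR' k' :=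
    fun k _ k' _ h => hrr' (congrArg Prod.fst h)
  set x : (Fin n → ℝ) × (Fin n → ℝ) → ℝ := pairX m w pR pR' with hxdef
  have hmaster : ∀ h : (Fin n → ℝ) × (Fin n → ℝ) → ℝ,
      ∑ᶠ p, x p * h p = ∑ k ∈ Finset.range m, w k * (h (pR k) + h (pR' k)) := fun h => by
    rw [hxdef]
    exact pairX_finsum m w pR pR' hinjL hinjR hneLR h
  have hwsum : ∑ k ∈ Finset.range m, w k = 1/2 := by
    have h3 : m - 1 + 1 = m := Nat.succ_pred_eq_of_pos hm1
    have h1 : ∑ k ∈ Finset.range m, ((m-1).choose k : ℝ) = 2^(m-1) := by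
      have h2 := Nat.sum_range_choose (m-1)
      rw [h3] at h2
      exact_mod_cast h2
    have hpow : (2:ℝ)^m = 2^(m-1) * 2 := by rw [← pow_succ, h3]
    simp only [hwdef]
    rw [← Finset.sum_div, h1]
    field_simp
    rw [hpow]
  -- the key calibration identity
  have key : ∀ cv : ℝ, ∑ k ∈ Finset.range m,
      w k * ((if c (k+1) = cv then r i - cv else 0) + (if c k = cv then r j - cv else 0))
        = 0 := by
    intro cv
    by_cases hex : ∃ t, t ≤ m ∧ c t = cv
    · obtain ⟨t, htm, rfl⟩ := hex
      simp only [hcinj.eq_iff, mul_add, Finset.sum_add_distrib, mul_ite, mul_zero]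
      rcases Nat.eq_zero_or_pos t with rfl | htpos
      · have hz1 : ∑ k ∈ Finset.range m, (if k + 1 = 0 then w k * (r i - c 0) else 0) = 0 :=
          Finset.sum_eq_zero fun k _ => if_neg (by omega)
        have hz2 : ∑ k ∈ Finset.range m, (if k = 0 then w k * (r j - c 0) else 0) = 0 := by
          rw [Finset.sum_ite_eq' (Finset.range m) 0 (fun k => w k * (r j - c 0)), hc0]
          simp
        rw [hz1, hz2, add_zero]
      · obtain ⟨u, rfl⟩ : ∃ u, t = u + 1 := ⟨t - 1, by omega⟩
        have hsimp : ∀ k ∈ Finset.range m,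
            (if k + 1 = u + 1 then w k * (r i - c (u+1)) else 0)
              = if k = u then w k * (r i - c (u+1)) else 0 := by
          intro k _
          simp only [Nat.add_right_cancel_iff]
        rw [Finset.sum_congr rfl hsimp, Finset.sum_ite_eq' (Finset.range m) u,
          Finset.sum_ite_eq' (Finset.range m) (u+1)]
        have hu : u ∈ Finset.range m := Finset.mem_range.2 (by omega)
        rw [if_pos hu]
        by_cases hum : u + 1 < m
        · rw [if_pos (Finset.mem_range.2 hum)]
          -- combinatorial identity
          have hnat := Nat.choose_succ_right_eq (m-1) u
          have h2 : ((m - 1 - u : ℕ) : ℝ) = (m:ℝ) - 1 - (u:ℝ) := by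
            rw [Nat.cast_sub (by omega : u ≤ m - 1), Nat.cast_sub hm1]
            norm_num
          have hcast : ((m-1).choose (u+1) : ℝ) * ((u:ℝ)+1)
              = ((m-1).choose u : ℝ) * ((m:ℝ) - 1 - (u:ℝ)) := by
            calc ((m-1).choose (u+1) : ℝ) * ((u:ℝ)+1)
                = (((m-1).choose (u+1) * (u+1) : ℕ) : ℝ) := by push_cast; ring
              _ = (((m-1).choose u * (m-1-u) : ℕ) : ℝ) := by rw [hnat]
              _ = ((m-1).choose u : ℝ) * ((m:ℝ) - 1 - (u:ℝ)) := by rw [Nat.cast_mul, h2]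
          have e1 : r i - c (u+1) = ((m:ℝ) - 1 - u) * d := by
            have hri : r i = r j + (m:ℝ) * d := by rw [← hcm]
            simp only [hcdef]
            push_cast
            rw [hri]
            ring
          have e2 : r j - c (u+1) = -(((u:ℝ)+1) * d) := by
            simp only [hcdef]
            push_cast
            ring
          rw [e1, e2]
          simp only [hwdef]
          linear_combination (-(d / (2:ℝ)^m)) * hcast
        · have hum' : u + 1 = m := by
            have := Finset.mem_range.1 hu
            omega
          rw [if_neg (by simp [hum'])]
          rw [hum', hcm]
          simp
    · push_neg at hex
      refine Finset.sum_eq_zero fun k hk => ?_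
      have hk' := Finset.mem_range.1 hk
      rw [if_neg (hex (k+1) (by omega)), if_neg (hex k (by omega))]
      simp
  refine ⟨x, ⟨?_, ?_, ?_, ?_⟩, ?_, ?_⟩
  · -- finite support
    rw [hxdef]
    exact Set.Finite.subset (Finset.finite_toSet _) (pairX_support m w pR pR')
  · -- nonneg
    rw [hxdef]
    exact pairX_nonneg m w pR pR' hw0
  · -- signal bounds
    intro p hp l
    have hpS := pairX_support m w pR pR' (by rw [hxdef] at hp; exact hp)
    simp only [Finset.coe_union, Set.mem_union, Finset.coe_image, Set.mem_image,
      Finset.mem_coe, Finset.mem_range] at hpS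
    rcases hpS with ⟨k, hk, rfl⟩ | ⟨k, hk, rfl⟩
    · show 0 ≤ sR k l ∧ sR k l ≤ 1
      rcases eq_or_ne l i with rfl | hli
      · rw [hsRi]; exact hcbound (k+1) hk
      rcases eq_or_ne l j with rfl | hlj
      · rw [hsRj]; exact hcbound k (by omega)
      · rw [hsRo k l hli hlj]; exact hr l
    · show 0 ≤ sR' k l ∧ sR' k l ≤ 1
      rcases eq_or_ne l i with rfl | hli
      · rw [hsR'i]; exact hcbound k (by omega)
      rcases eq_or_ne l j with rfl | hlj
      · rw [hsR'j]; exact hcbound (k+1) hk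
      · rw [hsR'o k l hli hlj]; exact hr' l
  · -- marginal
    intro r0
    rcases eq_or_ne r0 r with rfl | h1
    · have hx : ∀ s, x (r0, s) = ∑ k ∈ Finset.range m, @ite ℝ (s = sR k) (Classical.propDecidable _) (w k) 0 := by
        intro s
        rw [hxdef]
        unfold pairX
        apply Finset.sum_congr rfl
        intro k _
        have hne2 : (r0, s) ≠ pR' k := fun hE => hrr' (congrArg Prod.fst hE)
        by_cases hs : s = sR k
        · rw [if_pos (by rw [hs] : (r0, s) = pR k), if_neg hne2, if_pos hs, add_zero]
        · rw [if_neg (fun hE => hs (congrArg Prod.snd hE)), if_neg hne2, if_neg hs, add_zero]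
      rw [finsum_congr hx]
      rw [single_finsum m w sR (fun k _ k' _ h => by
        have h1 : sR k i = sR k' i := congrFun h i
        rw [hsRi, hsRi] at h1
        have := hcinj h1
        omega), hwsum, hgdef]
      simp
    rcases eq_or_ne r0 r' with rfl | h2
    · have hx : ∀ s, x (r0, s) = ∑ k ∈ Finset.range m, @ite ℝ (s = sR' k) (Classical.propDecidable _) (w k) 0 := by
        intro s
        rw [hxdef]
        unfold pairX
        apply Finset.sum_congr rfl
        intro k _
        have hne2 : (r0, s) ≠ pR k := fun hE => hrr' (congrArg Prod.fst hE).symm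
        by_cases hs : s = sR' k
        · rw [if_pos (by rw [hs] : (r0, s) = pR' k), if_neg hne2, if_pos hs, zero_add]
        · rw [if_neg hne2, if_neg (fun hE => hs (congrArg Prod.snd hE)), if_neg hs, add_zero]
      rw [finsum_congr hx]
      rw [single_finsum m w sR' (fun k _ k' _ h => by
        have h1 : sR' k j = sR' k' j := congrFun h j
        rw [hsR'j, hsR'j] at h1
        have := hcinj h1
        omega), hwsum, hgdef]
      simp [hrr'.symm]
    · have hx : ∀ s, x (r0, s) = 0 := by
        intro s
        rw [hxdef]
        apply pairX_eq_zero
        intro k _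
        constructor
        · intro hE
          exact h1 (congrArg Prod.fst hE)
        · intro hE
          exact h2 (congrArg Prod.fst hE)
      rw [finsum_congr hx, finsum_zero, hgdef, if_neg h1, if_neg h2]
  · -- calibration
    intro l cv _ _
    have hrw : ∀ p : (Fin n → ℝ) × (Fin n → ℝ),
        (if p.2 l = cv then x p * (p.1 l - cv) else 0)
          = x p * (if p.2 l = cv then p.1 l - cv else 0) := by
      intro p
      split <;> simp
    rw [finsum_congr hrw, hmaster (fun p => if p.2 l = cv then p.1 l - cv else 0)]
    rcases eq_or_ne l i with rfl | hli
    · have hcongr : ∀ k ∈ Finset.range m,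
          w k * ((if (pR k).2 l = cv then (pR k).1 l - cv else 0)
            + (if (pR' k).2 l = cv then (pR' k).1 l - cv else 0))
          = w k * ((if c (k+1) = cv then r l - cv else 0)
            + (if c k = cv then r j - cv else 0)) := by
        intro k _
        have e1 : (pR k).2 l = c (k+1) := hsRi k
        have e2 : (pR k).1 l = r l := rfl
        have e3 : (pR' k).2 l = c k := hsR'i k
        have e4 : (pR' k).1 l = r j := hswap2.symm
        rw [e1, e2, e3, e4]
      rw [Finset.sum_congr rfl hcongr]
      exact key cv
    rcases eq_or_ne l j with rfl | hlj
    · have hcongr : ∀ k ∈ Finset.range m,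
          w k * ((if (pR k).2 l = cv then (pR k).1 l - cv else 0)
            + (if (pR' k).2 l = cv then (pR' k).1 l - cv else 0))
          = w k * ((if c (k+1) = cv then r i - cv else 0)
            + (if c k = cv then r l - cv else 0)) := by
        intro k _
        have e1 : (pR k).2 l = c k := hsRj k
        have e2 : (pR k).1 l = r l := rfl
        have e3 : (pR' k).2 l = c (k+1) := hsR'j k
        have e4 : (pR' k).1 l = r i := hswap1.symm
        rw [e1, e2, e3, e4]
        ring
      rw [Finset.sum_congr rfl hcongr]
      exact key cv
    · refine Finset.sum_eq_zero fun k _ => ?_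
      have e1 : (pR k).2 l = r l := hsRo k l hli hlj
      have e2 : (pR k).1 l = r l := rfl
      have e3 : (pR' k).2 l = r' l := hsR'o k l hli hlj
      have e4 : (pR' k).1 l = r' l := rfl
      rw [e1, e2, e3, e4]
      have z1 : (if r l = cv then r l - cv else 0) = 0 := by
        split
        · next h => rw [h]; ring
        · rfl
      have z2 : (if r' l = cv then r' l - cv else 0) = 0 := by
        split
        · next h => rw [h]; ring
        · rfl
      rw [z1, z2]
      ring
  · -- revenue bound
    set T : (Fin n → ℝ) × (Fin n → ℝ) → ℝ := fun p =>
      ((winners (fun _ => v) p.2).card : ℝ)⁻¹ *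
        ∑ l ∈ winners (fun _ => v) p.2, p.1 l * (maxOther (fun _ => v) p.2 l / p.2 l)
      with hTdef
    have hRev : RevN (fun _ => v) x = ∑ k ∈ Finset.range m, w k * (T (pR k) + T (pR' k)) :=
      hmaster T
    rcases eq_or_lt_of_le hv with hveq | hvpos
    · -- v = 0
      have hT0 : ∀ p : (Fin n → ℝ) × (Fin n → ℝ), T p = 0 := by
        intro p
        have hz : ∀ l ∈ winners (fun _ => v) p.2,
            p.1 l * (maxOther (fun _ => v) p.2 l / p.2 l) = 0 := by
          intro l _
          rw [← hveq, maxOther_zero hn, zero_div, mul_zero]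
        show ((winners (fun _ => v) p.2).card : ℝ)⁻¹ *
            (∑ l ∈ winners (fun _ => v) p.2, p.1 l * (maxOther (fun _ => v) p.2 l / p.2 l)) = 0
        rw [Finset.sum_eq_zero hz, mul_zero]
      have hR0 : RevN (fun _ => v) x = 0 := by
        rw [hRev]
        exact Finset.sum_eq_zero fun k _ => by rw [hT0, hT0, add_zero, mul_zero]
      rw [hR0, ← hveq]
      nlinarith
    · -- 0 < v
      have hTpR : ∀ k, T (pR k) = r i * (v * c k / c (k+1)) := by
        intro k
        have hwin : winners (fun _ => v) (sR k) = {i} := by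
          apply winners_eq_singleton v hvpos (sR k) i
          intro l hl
          rw [hsRi]
          rcases eq_or_ne l j with rfl | hlj
          · rw [hsRj]; exact hcmono (Nat.lt_succ_self k)
          · rw [hsRo k l hl hlj]
            calc r l ≤ r j := (hdom l hl hlj).1
              _ = c 0 := hc0.symm
              _ ≤ c k := hcmono.monotone (Nat.zero_le k)
              _ < c (k+1) := hcmono (Nat.lt_succ_self k)
        have hmo : maxOther (fun _ => v) (sR k) i = v * c k := by
          have h1 : ∀ l, l ≠ i → sR k l ≤ sR k j := by
            intro l hl
            rw [hsRj]
            rcases eq_or_ne l j with rfl | hlj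
            · rw [hsRj]
            · rw [hsRo k l hl hlj]
              calc r l ≤ r j := (hdom l hl hlj).1
                _ = c 0 := hc0.symm
                _ ≤ c k := hcmono.monotone (Nat.zero_le k)
          have := maxOther_eq v hv (sR k) i j hji h1
          rwa [hsRj] at this
        show ((winners (fun _ => v) (sR k)).card : ℝ)⁻¹ *
            (∑ l ∈ winners (fun _ => v) (sR k), r l * (maxOther (fun _ => v) (sR k) l / sR k l))
          = r i * (v * c k / c (k+1))
        rw [hwin, Finset.sum_singleton, hmo, hsRi]
        simp
      have hTpR' : ∀ k, T (pR' k) = r i * (v * c k / c (k+1)) := by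
        intro k
        have hwin : winners (fun _ => v) (sR' k) = {j} := by
          apply winners_eq_singleton v hvpos (sR' k) j
          intro l hl
          rw [hsR'j]
          rcases eq_or_ne l i with rfl | hli
          · rw [hsR'i]; exact hcmono (Nat.lt_succ_self k)
          · rw [hsR'o k l hli hl]
            calc r' l ≤ r j := (hdom l hli hl).2
              _ = c 0 := hc0.symm
              _ ≤ c k := hcmono.monotone (Nat.zero_le k)
              _ < c (k+1) := hcmono (Nat.lt_succ_self k)
        have hmo : maxOther (fun _ => v) (sR' k) j = v * c k := by
          have h1 : ∀ l, l ≠ j → sR' k l ≤ sR' k i := by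
            intro l hl
            rw [hsR'i]
            rcases eq_or_ne l i with rfl | hli
            · rw [hsR'i]
            · rw [hsR'o k l hli hl]
              calc r' l ≤ r j := (hdom l hli hl).2
                _ = c 0 := hc0.symm
                _ ≤ c k := hcmono.monotone (Nat.zero_le k)
          have := maxOther_eq v hv (sR' k) j i hij h1
          rwa [hsR'i] at this
        show ((winners (fun _ => v) (sR' k)).card : ℝ)⁻¹ *
            (∑ l ∈ winners (fun _ => v) (sR' k), r' l * (maxOther (fun _ => v) (sR' k) l / sR' k l))
          = r i * (v * c k / c (k+1))
        rw [hwin, Finset.sum_singleton, hmo, hsR'j, ← hswap1]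
        simp
      -- per-term lower bound
      have hterm : ∀ k ∈ Finset.range m,
          2 * (r i * v) * (w k * ((k:ℝ)/((k:ℝ)+1))) ≤ w k * (T (pR k) + T (pR' k)) := by
        intro k _
        rw [hTpR k, hTpR' k]
        have hck1 : 0 < c (k+1) := hcpos k
        have hfrac : (k:ℝ)/((k:ℝ)+1) ≤ c k / c (k+1) := by
          rw [div_le_div_iff₀ (by positivity) hck1]
          have h1 : c (k+1) = c k + d := by
            simp only [hcdef]
            push_cast
            ring
          have h2 := hclb k
          have h3 := hcb k
          nlinarith
        have hnn : 0 ≤ 2 * (r i * v) * w k := by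
          have := hw0 k
          positivity
        calc 2 * (r i * v) * (w k * ((k:ℝ)/((k:ℝ)+1)))
            = (2 * (r i * v) * w k) * ((k:ℝ)/((k:ℝ)+1)) := by ring
          _ ≤ (2 * (r i * v) * w k) * (c k / c (k+1)) := mul_le_mul_of_nonneg_left hfrac hnn
          _ = w k * (r i * (v * c k / c (k+1)) + r i * (v * c k / c (k+1))) := by ring
      -- the binomial tail bound
      have hid : ∀ k : ℕ, w k * (1/((k:ℝ)+1)) = (m.choose (k+1) : ℝ)/((m:ℝ) * 2^m) := by
        intro k
        have hnat : m * (m-1).choose k = m.choose (k+1) * (k+1) := by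
          have h1 := Nat.add_one_mul_choose_eq (m-1) k
          rw [(by omega : m - 1 + 1 = m)] at h1
          exact h1
        have hcast : (m:ℝ) * ((m-1).choose k : ℝ) = (m.choose (k+1) : ℝ) * ((k:ℝ)+1) := by
          exact_mod_cast hnat
        simp only [hwdef]
        rw [div_mul_div_comm, mul_one, div_eq_div_iff (by positivity) (by positivity)]
        push_cast
        linear_combination ((2:ℝ)^m) * hcast
      have hnatsum : ∑ k ∈ Finset.range m, m.choose (k+1) ≤ 2^m := by
        have h1 : (∑ k ∈ Finset.range m, m.choose (k+1)) + m.choose 0 = 2^m := by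
          rw [← Finset.sum_range_succ']
          exact Nat.sum_range_choose m
        omega
      have hfr : ∑ k ∈ Finset.range m, w k * (1/((k:ℝ)+1)) ≤ 1/m := by
        rw [Finset.sum_congr rfl (fun k _ => hid k), ← Finset.sum_div]
        have h1 : (∑ k ∈ Finset.range m, (m.choose (k+1) : ℝ)) ≤ 2^m := by
          exact_mod_cast hnatsum
        rw [div_le_iff₀ (by positivity)]
        have h2 : 1/(m:ℝ) * ((m:ℝ) * 2^m) = 2^m := by
          field_simp
        rw [h2]
        exact h1
      have hsum2 : 1/2 - 1/(m:ℝ) ≤ ∑ k ∈ Finset.range m, w k * ((k:ℝ)/((k:ℝ)+1)) := by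
        have heq : ∑ k ∈ Finset.range m, w k * ((k:ℝ)/((k:ℝ)+1))
            = (∑ k ∈ Finset.range m, w k) - ∑ k ∈ Finset.range m, w k * (1/((k:ℝ)+1)) := by
          rw [← Finset.sum_sub_distrib]
          apply Finset.sum_congr rfl
          intro k _
          have hk1 : ((k:ℝ)+1) ≠ 0 := by positivity
          have hky : (k:ℝ)/((k:ℝ)+1) = 1 - 1/((k:ℝ)+1) := by
            field_simp
            ring
          rw [hky]
          ring
        rw [heq, hwsum]
        linarith
      -- conclude
      have hεm : 2 * (r i * v) / m ≤ ε := by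
        have h1 : 2 * r i * v / ε ≤ (m:ℝ) := by
          calc 2 * r i * v / ε ≤ (⌈2 * r i * v / ε⌉₊ : ℝ) := Nat.le_ceil _
            _ ≤ (m:ℝ) := by exact_mod_cast le_max_right 1 ⌈2 * r i * v / ε⌉₊
        rw [div_le_iff₀ hm0]
        rw [div_le_iff₀ hε] at h1
        nlinarith
      rw [hRev]
      have hstep1 : ∑ k ∈ Finset.range m, 2 * (r i * v) * (w k * ((k:ℝ)/((k:ℝ)+1)))
          ≤ ∑ k ∈ Finset.range m, w k * (T (pR k) + T (pR' k)) := Finset.sum_le_sum hterm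
      have hstep2 : ∑ k ∈ Finset.range m, 2 * (r i * v) * (w k * ((k:ℝ)/((k:ℝ)+1)))
          = 2 * (r i * v) * ∑ k ∈ Finset.range m, w k * ((k:ℝ)/((k:ℝ)+1)) := by
        rw [Finset.mul_sum]
      have hnn2 : (0:ℝ) ≤ 2 * (r i * v) := by positivity
      have hstep3 : 2 * (r i * v) * (1/2 - 1/(m:ℝ))
          ≤ 2 * (r i * v) * ∑ k ∈ Finset.range m, w k * ((k:ℝ)/((k:ℝ)+1)) :=
        mul_le_mul_of_nonneg_left hsum2 hnn2
      have hfin : 2 * (r i * v) * (1/2 - 1/(m:ℝ)) = r i * v - 2 * (r i * v) / m := by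
        field_simp
      nlinarith [hstep1, hstep3, hεm]
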